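/- Let (T_0, T_1) be an extended 1-perfect trade of length n, and let G be the simple graph with vertex set T_0 ∪ T_1 in which two words are adjacent if and only if their Hamming distance is 2 (the subgraph of the halved n-cube induced by T_0 ∪ T_1). Then (T_0, T_1) is primary if and only if G is connected. -/

import Mathlib

section Aux

lemma castNorm {n : ℕ} (x : Fin n → ZMod 2) :
    ((hammingNorm x : ℕ) : ZMod 2) = ∑ i, x i := by
  rw [hammingNorm, Finset.card_filter]
  push_cast
  refine Finset.sum_congr rfl fun i _ => ?_
  generalize x i = a
  revert a; decide

lemma castDist {n : ℕ} (x y : Fin n → ZMod 2) :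
    ((hammingDist x y : ℕ) : ZMod 2) =
      ((hammingNorm x : ℕ) : ZMod 2) + ((hammingNorm y : ℕ) : ZMod 2) := by
  rw [hammingDist_eq_hammingNorm, castNorm, castNorm, castNorm, ← Finset.sum_add_distrib]
  refine Finset.sum_congr rfl fun i _ => ?_
  simp only [Pi.add_apply, Pi.neg_apply]
  generalize x i = a; generalize y i = b
  revert a b; decide

lemma evenCast {m : ℕ} : Even m ↔ ((m : ZMod 2) = 0) := by
  rw [ZMod.natCast_eq_zero_iff]
  exact even_iff_two_dvd

lemma oddCast {m : ℕ} : Odd m ↔ ((m : ZMod 2) = 1) := by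
  rw [Nat.not_even_iff_odd.symm, evenCast]
  generalize (m : ZMod 2) = a
  revert a; decide

/-- An odd word at distance 1 from an even word. -/
lemma odd_of_dist_one {n : ℕ} {x u : Fin n → ZMod 2} (hu : Even (hammingNorm u))
    (h : hammingDist x u = 1) : Odd (hammingNorm x) := by
  rw [oddCast]
  have := castDist x u
  rw [h, evenCast.mp hu, add_zero] at this
  simpa using this.symm

/-- Two even words at distance ≤ 2 that are distinct are at distance exactly 2. -/
lemma dist_eq_two {n : ℕ} {u w : Fin n → ZMod 2} (hu : Even (hammingNorm u))
    (hw : Even (hammingNorm w)) (hne : u ≠ w) (hle : hammingDist u w ≤ 2) :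
    hammingDist u w = 2 := by
  have he : Even (hammingDist u w) := by
    rw [evenCast, castDist, evenCast.mp hu, evenCast.mp hw, add_zero]
  have h0 : hammingDist u w ≠ 0 := by
    simpa [hammingDist_eq_zero] using hne
  obtain ⟨k, hk⟩ := he
  omega

/-- midpoint: common neighbor of two words at distance 2. -/
lemma exists_mid {n : ℕ} {u v : Fin n → ZMod 2} (h : hammingDist u v = 2) :
    ∃ x, hammingDist x u = 1 ∧ hammingDist x v = 1 := by
  classical
  have hne : ({i | u i ≠ v i} : Finset (Fin n)).Nonempty := by
    rw [← Finset.card_pos, ← hammingDist, h]; norm_num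
  obtain ⟨i, hi⟩ := hne
  simp only [Finset.mem_filter, Finset.mem_univ, true_and] at hi
  refine ⟨Function.update u i (v i), ?_, ?_⟩
  · have : ({j | Function.update u i (v i) j ≠ u j} : Finset (Fin n)) = {i} := by
      ext j
      simp only [Finset.mem_filter, Finset.mem_univ, true_and, Finset.mem_singleton]
      rcases eq_or_ne j i with rfl | hj
      · simp [Function.update_self, Ne.symm hi]
      · simp [Function.update_of_ne hj, hj]
    rw [hammingDist, this, Finset.card_singleton]
  · have : ({j | Function.update u i (v i) j ≠ v j} : Finset (Fin n)) =
        ({j | u j ≠ v j} : Finset (Fin n)) \ {i} := by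
      ext j
      simp only [Finset.mem_filter, Finset.mem_univ, true_and, Finset.mem_sdiff,
        Finset.mem_singleton]
      rcases eq_or_ne j i with rfl | hj
      · simp [Function.update_self]
      · simp [Function.update_of_ne hj, hj]
    rw [hammingDist, this, Finset.card_sdiff_of_subset (by simpa using hi)]
    rw [← hammingDist, h, Finset.card_singleton]

end Aux

/-- An extended 1-perfect trade of length `n`. -/
def IsExtTrade {n : ℕ} (T₀ T₁ : Finset (Fin n → ZMod 2)) : Prop :=
  T₀.Nonempty ∧ T₁.Nonempty ∧ Disjoint T₀ T₁ ∧
  (∀ x ∈ T₀ ∪ T₁, Even (hammingNorm x)) ∧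
  ∀ x : Fin n → ZMod 2, Odd (hammingNorm x) →
    (T₀.filter fun y => hammingDist x y = 1).card =
      (T₁.filter fun y => hammingDist x y = 1).card ∧
    (T₀.filter fun y => hammingDist x y = 1).card ≤ 1

/-- A trade is primary if it cannot be split into two trades. -/
def IsPrimary {n : ℕ} (T₀ T₁ : Finset (Fin n → ZMod 2)) : Prop :=
  ¬ ∃ A₀ A₁ B₀ B₁ : Finset (Fin n → ZMod 2),
      IsExtTrade A₀ A₁ ∧ IsExtTrade B₀ B₁ ∧
      Disjoint A₀ B₀ ∧ Disjoint A₁ B₁ ∧ T₀ = A₀ ∪ B₀ ∧ T₁ = A₁ ∪ B₁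

/-- The subgraph of the halved n-cube induced by T₀ ∪ T₁: two words are adjacent
iff their Hamming distance is 2. -/
def tradeGraph {n : ℕ} (T₀ T₁ : Finset (Fin n → ZMod 2)) :
    SimpleGraph ↥(T₀ ∪ T₁) :=
  SimpleGraph.fromRel fun x y => hammingDist (x : Fin n → ZMod 2) (y : Fin n → ZMod 2) = 2

section Aux2

lemma IsExtTrade.swap {n : ℕ} {T₀ T₁ : Finset (Fin n → ZMod 2)} (h : IsExtTrade T₀ T₁) :
    IsExtTrade T₁ T₀ := by
  obtain ⟨h1, h2, h3, h4, h5⟩ := h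
  refine ⟨h2, h1, h3.symm, fun x hx => h4 x (by rwa [Finset.union_comm]), fun x hx => ?_⟩
  obtain ⟨he, hle⟩ := h5 x hx
  exact ⟨he.symm, he ▸ hle⟩

lemma IsExtTrade.npos {n : ℕ} {T₀ T₁ : Finset (Fin n → ZMod 2)} (h : IsExtTrade T₀ T₁) :
    n ≠ 0 := by
  rintro rfl
  obtain ⟨⟨a, ha⟩, ⟨b, hb⟩, hd, -⟩ := h
  have : a = b := funext fun i => i.elim0
  subst this
  exact Finset.disjoint_left.mp hd ha hb

/-- For odd x with a T₀-neighbor u: the T₀ filter is exactly {u}, and there is a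
unique T₁-neighbor. -/
lemma filter_eq_singleton {n : ℕ} {T₀ T₁ : Finset (Fin n → ZMod 2)} (hT : IsExtTrade T₀ T₁)
    {x u : Fin n → ZMod 2} (hx : Odd (hammingNorm x)) (hu : u ∈ T₀)
    (hxu : hammingDist x u = 1) :
    (T₀.filter fun y => hammingDist x y = 1) = {u} ∧
    ∃ w ∈ T₁, hammingDist x w = 1 := by
  obtain ⟨he, hle⟩ := hT.2.2.2.2 x hx
  have humem : u ∈ T₀.filter fun y => hammingDist x y = 1 := Finset.mem_filter.mpr ⟨hu, hxu⟩
  have h1 : (T₀.filter fun y => hammingDist x y = 1).card = 1 :=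
    le_antisymm hle (Finset.card_pos.mpr ⟨u, humem⟩)
  constructor
  · exact Finset.eq_singleton_iff_unique_mem.mpr
      ⟨humem, fun y hy => Finset.card_le_one.mp hle y hy u humem⟩
  · have : (T₁.filter fun y => hammingDist x y = 1).Nonempty := by
      rw [← Finset.card_pos, ← he, h1]; norm_num
    obtain ⟨w, hw⟩ := this
    rw [Finset.mem_filter] at hw
    exact ⟨w, hw.1, hw.2⟩

/-- Core exchange lemma: a neighbor (at Hamming distance 2, inside the trade) of an
element of A₀ lies in A₁. -/
lemma cross {n : ℕ} {T₀ T₁ A₀ A₁ : Finset (Fin n → ZMod 2)} (hT : IsExtTrade T₀ T₁)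
    (hA : IsExtTrade A₀ A₁) (hA₀ : A₀ ⊆ T₀) (hA₁ : A₁ ⊆ T₁) {u v : Fin n → ZMod 2}
    (hu : u ∈ A₀) (hv : v ∈ T₀ ∪ T₁) (huv : hammingDist u v = 2) : v ∈ A₁ := by
  obtain ⟨x, hxu, hxv⟩ := exists_mid huv
  have hx : Odd (hammingNorm x) :=
    odd_of_dist_one (hT.2.2.2.1 u (Finset.mem_union_left _ (hA₀ hu))) hxu
  obtain ⟨hT0, -⟩ := filter_eq_singleton hT hx (hA₀ hu) hxu
  have hvT1 : v ∈ T₁ := by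
    rcases Finset.mem_union.mp hv with hv0 | hv1
    · exfalso
      have : v ∈ ({u} : Finset _) := hT0 ▸ Finset.mem_filter.mpr ⟨hv0, hxv⟩
      rw [Finset.mem_singleton] at this
      subst this
      simp [hammingDist_self] at huv
    · exact hv1
  obtain ⟨hA0, w, hwA1, hxw⟩ := filter_eq_singleton hA hx hu hxu
  obtain ⟨hT1, -⟩ := filter_eq_singleton hT.swap hx (hA₁ hwA1) hxw
  have : v ∈ ({w} : Finset _) := hT1 ▸ Finset.mem_filter.mpr ⟨hvT1, hxv⟩
  rw [Finset.mem_singleton] at this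
  exact this ▸ hwA1

/-- Every element of T₀ has a partner in T₁ at Hamming distance 2. -/
lemma partner {n : ℕ} {T₀ T₁ : Finset (Fin n → ZMod 2)} (hT : IsExtTrade T₀ T₁)
    {u : Fin n → ZMod 2} (hu : u ∈ T₀) : ∃ w ∈ T₁, hammingDist u w = 2 := by
  have hn := hT.npos
  have hueven : Even (hammingNorm u) := hT.2.2.2.1 u (Finset.mem_union_left _ hu)
  set i : Fin n := ⟨0, Nat.pos_of_ne_zero hn⟩
  set x := Function.update u i (u i + 1) with hxdef
  have hxu : hammingDist x u = 1 := by
    have : ({j | x j ≠ u j} : Finset (Fin n)) = {i} := by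
      ext j
      simp only [Finset.mem_filter, Finset.mem_univ, true_and, Finset.mem_singleton]
      rcases eq_or_ne j i with rfl | hj
      · simp only [hxdef, Function.update_self, iff_true]
        intro h
        exact one_ne_zero (add_eq_left.mp h)
      · simp [hxdef, Function.update_of_ne hj, hj]
    rw [hammingDist, this, Finset.card_singleton]
  have hx : Odd (hammingNorm x) := odd_of_dist_one hueven hxu
  obtain ⟨-, w, hw, hxw⟩ := filter_eq_singleton hT hx hu hxu
  refine ⟨w, hw, dist_eq_two hueven (hT.2.2.2.1 w (Finset.mem_union_right _ hw)) ?_ ?_⟩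
  · rintro rfl
    exact Finset.disjoint_left.mp hT.2.2.1 hu hw
  · calc hammingDist u w ≤ hammingDist u x + hammingDist x w := hammingDist_triangle u x w
    _ = 2 := by rw [hammingDist_comm u x, hxu, hxw]

lemma dist_two_of_mid {n : ℕ} {T₀ T₁ : Finset (Fin n → ZMod 2)} (hT : IsExtTrade T₀ T₁)
    {x u w : Fin n → ZMod 2} (hu : u ∈ T₀) (hw : w ∈ T₁)
    (hxu : hammingDist x u = 1) (hxw : hammingDist x w = 1) : hammingDist u w = 2 := by
  refine dist_eq_two (hT.2.2.2.1 u (Finset.mem_union_left _ hu))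
    (hT.2.2.2.1 w (Finset.mem_union_right _ hw)) ?_ ?_
  · rintro rfl; exact Finset.disjoint_left.mp hT.2.2.1 hu hw
  · calc hammingDist u w ≤ hammingDist u x + hammingDist x w := hammingDist_triangle u x w
    _ = 2 := by rw [hammingDist_comm u x, hxu, hxw]

/-- Filtering a trade by a predicate invariant under distance-2 cross pairs
yields a trade (given nonemptiness). -/
lemma trade_filter {n : ℕ} {T₀ T₁ : Finset (Fin n → ZMod 2)} (hT : IsExtTrade T₀ T₁)
    (p : (Fin n → ZMod 2) → Prop) [DecidablePred p]
    (hp : ∀ u v, u ∈ T₀ → v ∈ T₁ → hammingDist u v = 2 → (p u ↔ p v))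
    (h0 : (T₀.filter p).Nonempty) (h1 : (T₁.filter p).Nonempty) :
    IsExtTrade (T₀.filter p) (T₁.filter p) := by
  refine ⟨h0, h1, Finset.disjoint_filter_filter hT.2.2.1, ?_, ?_⟩
  · intro x hx
    apply hT.2.2.2.1
    rcases Finset.mem_union.mp hx with h | h
    · exact Finset.mem_union_left _ (Finset.filter_subset _ _ h)
    · exact Finset.mem_union_right _ (Finset.filter_subset _ _ h)
  · intro x hx
    have hcomm0 : ((T₀.filter p).filter fun y => hammingDist x y = 1) =
        (T₀.filter fun y => hammingDist x y = 1).filter p := Finset.filter_comm _ _ _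
    have hcomm1 : ((T₁.filter p).filter fun y => hammingDist x y = 1) =
        (T₁.filter fun y => hammingDist x y = 1).filter p := Finset.filter_comm _ _ _
    rw [hcomm0, hcomm1]
    rcases Finset.eq_empty_or_nonempty (T₀.filter fun y => hammingDist x y = 1) with he | hne
    · have hc : (T₁.filter fun y => hammingDist x y = 1) = ∅ := by
        have := (hT.2.2.2.2 x hx).1
        rw [he] at this
        exact Finset.card_eq_zero.mp this.symm
      simp [he, hc]
    · obtain ⟨u, hu⟩ := hne
      rw [Finset.mem_filter] at hu
      obtain ⟨hT0, w, hwT1, hxw⟩ := filter_eq_singleton hT hx hu.1 hu.2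
      obtain ⟨hT1, -⟩ := filter_eq_singleton hT.swap hx hwT1 hxw
      rw [hT0, hT1]
      have hiff : p u ↔ p w := hp u w hu.1 hwT1 (dist_two_of_mid hT hu.1 hwT1 hu.2 hxw)
      by_cases hpu : p u
      · simp [Finset.filter_singleton, hpu, hiff.mp hpu]
      · have hpw : ¬ p w := fun h => hpu (hiff.mpr h)
        simp [Finset.filter_singleton, hpu, hpw]

lemma adj_of_dist_two {n : ℕ} {T₀ T₁ : Finset (Fin n → ZMod 2)}
    {u v : ↥(T₀ ∪ T₁)} (h : hammingDist (u : Fin n → ZMod 2) (v : Fin n → ZMod 2) = 2) :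
    (tradeGraph T₀ T₁).Adj u v := by
  rw [tradeGraph, SimpleGraph.fromRel_adj]
  refine ⟨?_, Or.inl h⟩
  rintro rfl
  simp [hammingDist_self] at h

end Aux2

/-- an extended 1-perfect trade is primary iff the subgraph of the
halved n-cube induced by T₀ ∪ T₁ is connected. -/
theorem stmt_9 (n : ℕ) (T₀ T₁ : Finset (Fin n → ZMod 2)) (hT : IsExtTrade T₀ T₁) :
    IsPrimary T₀ T₁ ↔ (tradeGraph T₀ T₁).Connected := by
  classical
  constructor
  · -- primary → connected
    intro hPrim
    haveI hne : Nonempty ↥(T₀ ∪ T₁) := by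
      obtain ⟨c, hc⟩ := hT.1
      exact ⟨⟨c, Finset.mem_union_left _ hc⟩⟩
    refine SimpleGraph.Connected.mk ?_
    intro a b
    by_contra hab
    apply hPrim
    set p : (Fin n → ZMod 2) → Prop :=
      fun v => ∃ h : v ∈ T₀ ∪ T₁, (tradeGraph T₀ T₁).Reachable a ⟨v, h⟩ with hpdef
    have htrans : ∀ u v : Fin n → ZMod 2, u ∈ T₀ ∪ T₁ → v ∈ T₀ ∪ T₁ →
        hammingDist u v = 2 → (p u ↔ p v) := by
      intro u v hu hv huv
      have hadj : (tradeGraph T₀ T₁).Adj ⟨u, hu⟩ ⟨v, hv⟩ := adj_of_dist_two huv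
      constructor
      · rintro ⟨hu', hr⟩
        have hr' : (tradeGraph T₀ T₁).Reachable a ⟨u, hu⟩ := hr
        exact ⟨hv, hr'.trans hadj.reachable⟩
      · rintro ⟨hv', hr⟩
        have hr' : (tradeGraph T₀ T₁).Reachable a ⟨v, hv⟩ := hr
        exact ⟨hu, hr'.trans hadj.symm.reachable⟩
    have htrans' : ∀ u v : Fin n → ZMod 2, u ∈ T₀ → v ∈ T₁ →
        hammingDist u v = 2 → (p u ↔ p v) := fun u v hu hv h =>
      htrans u v (Finset.mem_union_left _ hu) (Finset.mem_union_right _ hv) h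
    have hpa : p (a : Fin n → ZMod 2) :=
      ⟨a.2, by rw [show (⟨(a : Fin n → ZMod 2), a.2⟩ : ↥(T₀ ∪ T₁)) = a from rfl]⟩
    have hpb : ¬ p (b : Fin n → ZMod 2) := by
      rintro ⟨h, hr⟩
      exact hab ((show (⟨(b : Fin n → ZMod 2), h⟩ : ↥(T₀ ∪ T₁)) = b from rfl) ▸ hr)
    have nonempties : ∀ (q : (Fin n → ZMod 2) → Prop) [DecidablePred q],
        (∀ u v : Fin n → ZMod 2, u ∈ T₀ → v ∈ T₁ → hammingDist u v = 2 → (q u ↔ q v)) →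
        ∀ c : Fin n → ZMod 2, c ∈ T₀ ∪ T₁ → q c →
        (T₀.filter q).Nonempty ∧ (T₁.filter q).Nonempty := by
      intro q _ hq c hc hqc
      rcases Finset.mem_union.mp hc with h | h
      · obtain ⟨w, hw, hcw⟩ := partner hT h
        exact ⟨⟨c, Finset.mem_filter.mpr ⟨h, hqc⟩⟩,
          ⟨w, Finset.mem_filter.mpr ⟨hw, (hq c w h hw hcw).mp hqc⟩⟩⟩
      · obtain ⟨w, hw, hcw⟩ := partner hT.swap h
        rw [hammingDist_comm] at hcw
        exact ⟨⟨w, Finset.mem_filter.mpr ⟨hw, (hq w c hw h hcw).mpr hqc⟩⟩,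
          ⟨c, Finset.mem_filter.mpr ⟨h, hqc⟩⟩⟩
    have hnotp : ∀ u v : Fin n → ZMod 2, u ∈ T₀ → v ∈ T₁ → hammingDist u v = 2 →
        (¬ p u ↔ ¬ p v) := fun u v hu hv h => (htrans' u v hu hv h).not
    obtain ⟨hA0, hA1⟩ := nonempties p htrans' a a.2 hpa
    obtain ⟨hB0, hB1⟩ := nonempties (fun v => ¬ p v) hnotp b b.2 hpb
    refine ⟨T₀.filter p, T₁.filter p, T₀.filter (fun v => ¬ p v), T₁.filter (fun v => ¬ p v),
      trade_filter hT p htrans' hA0 hA1, trade_filter hT _ hnotp hB0 hB1,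
      ?_, ?_, ?_, ?_⟩
    · exact Finset.disjoint_filter_filter_not T₀ T₀ p
    · exact Finset.disjoint_filter_filter_not T₁ T₁ p
    · exact (Finset.filter_union_filter_not_eq (p := p) T₀).symm
    · exact (Finset.filter_union_filter_not_eq (p := p) T₁).symm
  · -- connected → primary
    intro hConn
    rintro ⟨A₀, A₁, B₀, B₁, hA, hB, d0, d1, hT0, hT1⟩
    have hA₀T : A₀ ⊆ T₀ := hT0 ▸ Finset.subset_union_left
    have hA₁T : A₁ ⊆ T₁ := hT1 ▸ Finset.subset_union_left
    have hB₀T : B₀ ⊆ T₀ := hT0 ▸ Finset.subset_union_right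
    have key : ∀ u v : Fin n → ZMod 2, v ∈ T₀ ∪ T₁ → hammingDist u v = 2 →
        u ∈ A₀ ∪ A₁ → v ∈ A₀ ∪ A₁ := by
      intro u v hv huv hmem
      rcases Finset.mem_union.mp hmem with h | h
      · exact Finset.mem_union_right _ (cross hT hA hA₀T hA₁T h hv huv)
      · exact Finset.mem_union_left _ (cross hT.swap hA.swap hA₁T hA₀T h
          (by rwa [Finset.union_comm] at hv) huv)
    obtain ⟨ea, hea⟩ := hA.1
    obtain ⟨eb, heb⟩ := hB.1
    have hva : ea ∈ T₀ ∪ T₁ := Finset.mem_union_left _ (hA₀T hea)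
    have hvb : eb ∈ T₀ ∪ T₁ := Finset.mem_union_left _ (hB₀T heb)
    obtain ⟨w⟩ := hConn.preconnected ⟨ea, hva⟩ ⟨eb, hvb⟩
    have hwalk : ∀ {s t : ↥(T₀ ∪ T₁)} (_ : (tradeGraph T₀ T₁).Walk s t),
        (s : Fin n → ZMod 2) ∈ A₀ ∪ A₁ → (t : Fin n → ZMod 2) ∈ A₀ ∪ A₁ := by
      intro s t w
      induction w with
      | nil => exact id
      | @cons s' m t' h q ih =>
        intro hs
        apply ih
        rw [tradeGraph, SimpleGraph.fromRel_adj] at h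
        rcases h.2 with h2 | h2
        · exact key _ _ m.2 h2 hs
        · exact key _ _ m.2 (by rwa [hammingDist_comm]) hs
    have : eb ∈ A₀ ∪ A₁ := hwalk w (Finset.mem_union_left _ hea)
    rcases Finset.mem_union.mp this with h | h
    · exact Finset.disjoint_right.mp d0 heb h
    · exact Finset.disjoint_left.mp hT.2.2.1 (hB₀T heb) (hA₁T h)
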